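/- Let (a_j, b_j)_{j ∈ J} be a finite family with a_j ∈ ℚ^n, b_j ∈ ℚ, let i ∈ J, and suppose the relaxed polyhedron P_i = {x ∈ ℚ^n : ∀ j ∈ J, j ≠ i, a_j · x ≤ b_j} is nonempty. Then there is NO irredundancy witness for constraint i (i.e., no x ∈ P_i with a_i · x > b_i) if and only if constraint i is a nonnegative Farkas combination of the other constraints, i.e., there exist y_j ≥ 0 (j ∈ J, j ≠ i) with Σ_{j≠i} y_j a_j = a_i and Σ_{j≠i} y_j b_j ≤ b_i. -/

import Mathlib

open Matrix

/-- Conic Farkas lemma over an abstract module with a positive-definite-ish pairing,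
proved by induction on the set of generators. -/
lemma farkas_cone {J M : Type*} [DecidableEq J] [AddCommGroup M] [Module ℚ M]
    (B : M → M → ℚ)
    (hBl : ∀ (x y : M) (r : ℚ) (w : M), B (x - r • y) w = B x w - r * B y w)
    (hBr : ∀ (x w : M) (r : ℚ) (v : M), B x (w - r • v) = B x w - r * B x v)
    (hpos : ∀ c : M, c ≠ 0 → 0 < B c c) :
    ∀ (s : Finset J) (a : J → M) (c : M),
      (∃ y : J → ℚ, (∀ j, 0 ≤ y j) ∧ ∑ j ∈ s, y j • a j = c) ∨
      (∃ z : M, (∀ j ∈ s, B z (a j) ≤ 0) ∧ 0 < B z c) := by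
  intro s
  induction s using Finset.induction_on with
  | empty =>
    intro a c
    by_cases hc : c = 0
    · exact Or.inl ⟨0, fun j => le_refl 0, by simp [hc]⟩
    · exact Or.inr ⟨c, by simp, hpos c hc⟩
  | @insert m t hm ih =>
    intro a c
    rcases ih a c with ⟨y, hy, hsum⟩ | ⟨z, hz, hzc⟩
    · refine Or.inl ⟨Function.update y m 0, ?_, ?_⟩
      · intro j
        rcases eq_or_ne j m with rfl | hj
        · simp
        · simpa [Function.update_of_ne hj] using hy j
      · rw [Finset.sum_insert hm]
        simp only [Function.update_self, zero_smul, zero_add]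
        rw [Finset.sum_congr rfl fun j hj => by
          rw [Function.update_of_ne (fun (h : _ = m) => hm (h ▸ hj))]]
        exact hsum
    · by_cases hzm : B z (a m) ≤ 0
      · refine Or.inr ⟨z, fun j hj => ?_, hzc⟩
        rcases Finset.mem_insert.mp hj with rfl | hj
        · exact hzm
        · exact hz j hj
      · push_neg at hzm
        have hzm' : B z (a m) ≠ 0 := ne_of_gt hzm
        set q : J → ℚ := fun j => B z (a j) / B z (a m) with hq
        set qc : ℚ := B z c / B z (a m) with hqc
        rcases ih (fun j => a j - q j • a m) (c - qc • a m) with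
          ⟨μ, hμ, hμsum⟩ | ⟨w0, hw, hwc⟩
        · -- cone case
          set K : ℚ := qc - ∑ j ∈ t, μ j * q j with hK
          have hKnn : 0 ≤ K := by
            have h1 : 0 < qc := div_pos hzc hzm
            have h2 : ∑ j ∈ t, μ j * q j ≤ 0 := by
              apply Finset.sum_nonpos
              intro j hj
              exact mul_nonpos_of_nonneg_of_nonpos (hμ j)
                (div_nonpos_of_nonpos_of_nonneg (hz j hj) (le_of_lt hzm))
            linarith
          refine Or.inl ⟨Function.update μ m K, ?_, ?_⟩
          · intro j
            rcases eq_or_ne j m with rfl | hj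
            · simpa using hKnn
            · simpa [Function.update_of_ne hj] using hμ j
          · rw [Finset.sum_insert hm, Function.update_self]
            rw [Finset.sum_congr rfl fun j hj => by
              rw [Function.update_of_ne (fun (h : _ = m) => hm (h ▸ hj))]]
            have expand : ∑ j ∈ t, μ j • (a j - q j • a m)
                = ∑ j ∈ t, μ j • a j - (∑ j ∈ t, μ j * q j) • a m := by
              rw [Finset.sum_smul, ← Finset.sum_sub_distrib]
              exact Finset.sum_congr rfl fun j _ => by rw [smul_sub, smul_smul]
            rw [expand] at hμsum
            have : ∑ j ∈ t, μ j • a j = c - qc • a m + (∑ j ∈ t, μ j * q j) • a m := by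
              rw [← hμsum]; abel
            rw [this, hK, sub_smul]
            abel
        · -- separation case
          set r : ℚ := B w0 (a m) / B z (a m) with hr
          refine Or.inr ⟨w0 - r • z, fun j hj => ?_, ?_⟩
          · rcases Finset.mem_insert.mp hj with rfl | hj
            · rw [hBl]
              rw [hr, div_mul_cancel₀ _ hzm']
              simp
            · have h1 := hw j hj
              rw [hBr] at h1
              rw [hBl]
              have : B w0 (a j) - r * B z (a j) = B w0 (a j) - q j * B w0 (a m) := by
                rw [hr, hq]
                field_simp
              rw [this]
              exact h1
          · rw [hBr] at hwc
            rw [hBl]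
            have : B w0 c - r * B z c = B w0 c - qc * B w0 (a m) := by
              rw [hr, hqc]
              field_simp
            rw [this]
            exact hwc

section Pairing

/-- The pairing on `(Fin n → ℚ) × ℚ` used to apply the conic Farkas lemma. -/
def pairB {n : ℕ} (p q : (Fin n → ℚ) × ℚ) : ℚ := p.1 ⬝ᵥ q.1 + p.2 * q.2

lemma pairB_left {n : ℕ} (x y : (Fin n → ℚ) × ℚ) (r : ℚ) (w : (Fin n → ℚ) × ℚ) :
    pairB (x - r • y) w = pairB x w - r * pairB y w := by
  simp [pairB, sub_dotProduct, smul_dotProduct]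
  ring

lemma pairB_right {n : ℕ} (x w : (Fin n → ℚ) × ℚ) (r : ℚ) (v : (Fin n → ℚ) × ℚ) :
    pairB x (w - r • v) = pairB x w - r * pairB x v := by
  simp [pairB, dotProduct_sub, dotProduct_smul]
  ring

lemma pairB_pos {n : ℕ} (c : (Fin n → ℚ) × ℚ) (hc : c ≠ 0) : 0 < pairB c c := by
  have h1 : 0 ≤ c.1 ⬝ᵥ c.1 := by
    apply Finset.sum_nonneg
    intro j _
    exact mul_self_nonneg _
  have h2 : 0 ≤ c.2 * c.2 := mul_self_nonneg _
  rcases eq_or_ne c.1 0 with hc1 | hc1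
  · have hc2 : c.2 ≠ 0 := fun h => hc (Prod.ext hc1 h)
    have : 0 < c.2 * c.2 := mul_self_pos.mpr hc2
    simp only [pairB]
    linarith
  · have : 0 < c.1 ⬝ᵥ c.1 :=
      lt_of_le_of_ne h1 (fun h => hc1 ((dotProduct_self_eq_zero).mp h.symm))
    simp only [pairB]
    linarith

end Pairing

lemma sum_dotProduct' {ι : Type*} {n : ℕ} (s : Finset ι) (f : ι → Fin n → ℚ)
    (x : Fin n → ℚ) : (∑ j ∈ s, f j) ⬝ᵥ x = ∑ j ∈ s, f j ⬝ᵥ x := by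
  simp [dotProduct, Finset.sum_apply, Finset.sum_mul]
  exact Finset.sum_comm


/-- A constraint `a i · x ≤ b i` of a finite system has no irredundancy witness
(a point violating constraint `i` while satisfying all others) iff it is a
nonnegative Farkas combination of the other constraints, provided the relaxed
polyhedron (dropping constraint `i`) is nonempty. -/
theorem no_witness_iff_farkas_combination {J : Type*} [Fintype J] [DecidableEq J] {n : ℕ}
    (a : J → (Fin n → ℚ)) (b : J → ℚ) (i : J)
    (hne : ∃ x : Fin n → ℚ, ∀ j, j ≠ i → a j ⬝ᵥ x ≤ b j) :
    (¬ ∃ x : Fin n → ℚ, (∀ j, j ≠ i → a j ⬝ᵥ x ≤ b j) ∧ b i < a i ⬝ᵥ x) ↔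
      ∃ y : J → ℚ, (∀ j, j ≠ i → 0 ≤ y j) ∧
        (∑ j ∈ Finset.univ.erase i, y j • a j) = a i ∧
        (∑ j ∈ Finset.univ.erase i, y j * b j) ≤ b i := by
  constructor
  · intro hnow
    -- set up the augmented generator family over `Option J`
    set A : Option J → (Fin n → ℚ) × ℚ :=
      fun o => Option.elim o ((0 : Fin n → ℚ), (1 : ℚ)) (fun j => (a j, b j)) with hA
    set s : Finset (Option J) :=
      insert none ((Finset.univ.erase i).map Function.Embedding.some) with hs
    have hnone : none ∉ (Finset.univ.erase i).map (Function.Embedding.some (α := J)) := by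
      simp
    rcases farkas_cone pairB pairB_left pairB_right pairB_pos s A (a i, b i) with
      ⟨Y, hY, hYsum⟩ | ⟨z, hz, hzc⟩
    · -- extract the Farkas combination
      rw [hs, Finset.sum_insert hnone, Finset.sum_map] at hYsum
      simp only [Function.Embedding.some_apply, hA, Option.elim] at hYsum
      refine ⟨fun j => Y (some j), fun j _ => hY (some j), ?_, ?_⟩
      · have h1 := congrArg Prod.fst hYsum
        simp only [Prod.fst_add, Prod.fst_sum, Prod.smul_fst, smul_zero, zero_add] at h1
        exact h1
      · have h2 := congrArg Prod.snd hYsum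
        simp only [Prod.snd_add, Prod.snd_sum, Prod.smul_snd, smul_eq_mul, mul_one] at h2
        have := hY none
        linarith
    · -- build a witness, contradiction
      exfalso
      apply hnow
      have hzn : z.2 ≤ 0 := by
        have := hz none (Finset.mem_insert_self _ _)
        simpa [hA, pairB] using this
      have hzj : ∀ j, j ≠ i → z.1 ⬝ᵥ a j + z.2 * b j ≤ 0 := by
        intro j hj
        have hmem : some j ∈ s := by
          rw [hs]
          apply Finset.mem_insert_of_mem
          simp [hj]
        simpa [hA, pairB] using hz (some j) hmem
      have hzi : 0 < z.1 ⬝ᵥ a i + z.2 * b i := by simpa [pairB] using hzc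
      rcases lt_or_eq_of_le hzn with hlt | heq
    -- case z.2 < 0
      · refine ⟨(-z.2)⁻¹ • z.1, fun j hj => ?_, ?_⟩
        · have h1 := hzj j hj
          rw [dotProduct_smul, dotProduct_comm]
          rw [smul_eq_mul, inv_mul_le_iff₀ (by linarith)]
          nlinarith
        · rw [dotProduct_smul, dotProduct_comm, smul_eq_mul,
            lt_inv_mul_iff₀ (by linarith : (0:ℚ) < -z.2)]
          nlinarith
    -- case z.2 = 0
      · obtain ⟨x₀, hx₀⟩ := hne
        rw [heq] at hzj hzi
        simp only [zero_mul, add_zero] at hzj hzi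
        set t : ℚ := |b i - a i ⬝ᵥ x₀| / (z.1 ⬝ᵥ a i) + 1 with ht
        have habs : 0 ≤ |b i - a i ⬝ᵥ x₀| := abs_nonneg _
        have htpos : 0 < t := by
          rw [ht]
          have := div_nonneg habs (le_of_lt hzi)
          linarith
        refine ⟨x₀ + t • z.1, fun j hj => ?_, ?_⟩
        · rw [dotProduct_add, dotProduct_smul, smul_eq_mul, dotProduct_comm (a j) z.1]
          have := hzj j hj
          nlinarith [hx₀ j hj]
        · rw [dotProduct_add, dotProduct_smul, smul_eq_mul, dotProduct_comm (a i) z.1]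
          have hkey : |b i - a i ⬝ᵥ x₀| < t * (z.1 ⬝ᵥ a i) := by
            rw [ht, add_mul, div_mul_cancel₀ _ (ne_of_gt hzi), one_mul]
            linarith
          have hle : b i - a i ⬝ᵥ x₀ ≤ |b i - a i ⬝ᵥ x₀| := le_abs_self _
          linarith
  · -- easy direction
    rintro ⟨y, hy, hsa, hsb⟩ ⟨x, hx, hxi⟩
    have : a i ⬝ᵥ x ≤ b i := by
      rw [← hsa, sum_dotProduct']
      calc ∑ j ∈ Finset.univ.erase i, (y j • a j) ⬝ᵥ x
          = ∑ j ∈ Finset.univ.erase i, y j * (a j ⬝ᵥ x) := by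
            exact Finset.sum_congr rfl fun j _ => by rw [smul_dotProduct, smul_eq_mul]
        _ ≤ ∑ j ∈ Finset.univ.erase i, y j * b j := by
            apply Finset.sum_le_sum
            intro j hj
            have hj' : j ≠ i := (Finset.mem_erase.mp hj).1
            exact mul_le_mul_of_nonneg_left (hx j hj') (hy j hj')
        _ ≤ b i := hsb
    linarith
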